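/- Let x0 < 0 and y_C = −(3|x0|/2)^{2/3}, and let K ⊂ ℝ² be the closed set K = {(x, y) : (y ≥ 0 and 9(x − x0)^2 + 4y^3 ≤ 9 x0^2) or (y_C ≤ y ≤ 0 and 2x0 + (2/3)(−y)^{3/2} ≤ x ≤ −(2/3)(−y)^{3/2})} (the closure of the normal Tricomi domain bounded by the two characteristics AC, BC and the normal Tricomi curve). Then K is invariant under the flow of the vector field D = −3x ∂x − 2y ∂y: for every (a, b) ∈ K and every t ≥ 0, the point (a e^{−3t}, b e^{−2t}) belongs to K; moreover (a e^{−3t}, b e^{−2t}) → (0, 0) as t → +∞. -/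
import Mathlib


open Set Filter

/-- The closed normal Tricomi domain is forward-invariant under
the flow `F_t(a,b) = (a e^{-3t}, b e^{-2t})` of `D = -3x ∂x - 2y ∂y`,
and every orbit tends to the origin: the domain is `D`-star-shaped. -/
theorem normal_tricomi_domain_D_star_shaped
    (x0 : ℝ) (hx0 : x0 < 0)
    (yC : ℝ) (hyC : yC = -(3 * |x0| / 2) ^ ((2 : ℝ) / 3))
    (K : Set (ℝ × ℝ))
    (hK : K = {p : ℝ × ℝ |
      (0 ≤ p.2 ∧ 9 * (p.1 - x0) ^ 2 + 4 * p.2 ^ 3 ≤ 9 * x0 ^ 2) ∨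
      (yC ≤ p.2 ∧ p.2 ≤ 0 ∧
        2 * x0 + (2 / 3) * (-p.2) ^ ((3 : ℝ) / 2) ≤ p.1 ∧
        p.1 ≤ -(2 / 3) * (-p.2) ^ ((3 : ℝ) / 2))}) :
    ∀ a b : ℝ, (a, b) ∈ K →
      (∀ t : ℝ, 0 ≤ t → (a * Real.exp (-3 * t), b * Real.exp (-2 * t)) ∈ K) ∧
      Tendsto (fun t : ℝ => (a * Real.exp (-3 * t), b * Real.exp (-2 * t)))
        atTop (nhds ((0 : ℝ), (0 : ℝ))) := by
  subst hK
  intro a b hab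
  constructor
  · intro t ht
    have he : (0:ℝ) < Real.exp (-3 * t) := Real.exp_pos _
    have he2 : (0:ℝ) < Real.exp (-2 * t) := Real.exp_pos _
    have he1 : Real.exp (-3 * t) ≤ 1 := Real.exp_le_one_iff.2 (by linarith)
    have he21 : Real.exp (-2 * t) ≤ 1 := Real.exp_le_one_iff.2 (by linarith)
    rcases hab with ⟨hb, h⟩ | ⟨h1, h2, h3, h4⟩
    · left
      refine ⟨mul_nonneg hb he2.le, ?_⟩
      simp only
      have hcube : (b * Real.exp (-2 * t)) ^ 3 = b ^ 3 * Real.exp (-3 * t) ^ 2 := by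
        rw [mul_pow, ← Real.exp_nat_mul, ← Real.exp_nat_mul]
        ring_nf
      rw [hcube]
      have hb3 : 0 ≤ b ^ 3 := pow_nonneg hb 3
      have hkey : 9 * a ^ 2 + 4 * b ^ 3 ≤ 18 * a * x0 := by nlinarith [h]
      nlinarith [mul_nonneg he.le (sub_nonneg.2 hkey),
        mul_nonneg (mul_nonneg he.le (sub_nonneg.2 he1)) (by nlinarith : (0:ℝ) ≤ 9 * a ^ 2 + 4 * b ^ 3)]
    · right
      have hrw : (-(b * Real.exp (-2 * t))) ^ ((3:ℝ)/2)
          = (-b) ^ ((3:ℝ)/2) * Real.exp (-3 * t) := by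
        rw [show -(b * Real.exp (-2 * t)) = (-b) * Real.exp (-2 * t) by ring,
          Real.mul_rpow (by linarith) he2.le, ← Real.exp_mul]
        ring_nf
      have hc : 0 ≤ (-b) ^ ((3:ℝ)/2) := Real.rpow_nonneg (by linarith) _
      refine ⟨?_, ?_, ?_, ?_⟩ <;> simp only [hrw]
      · nlinarith [mul_nonneg (neg_nonneg.2 h2) (sub_nonneg.2 he21)]
      · exact mul_nonpos_of_nonpos_of_nonneg h2 he2.le
      · nlinarith [mul_le_mul_of_nonneg_right h3 he.le,
          mul_nonneg (sub_nonneg.2 he1) (neg_nonneg.2 hx0.le)]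
      · nlinarith [mul_le_mul_of_nonneg_right h4 he.le]
  · have hA : Tendsto (fun t : ℝ => Real.exp (-3 * t)) atTop (nhds 0) := by
      have : Tendsto (fun t : ℝ => -3 * t) atTop atBot :=
        tendsto_id.const_mul_atTop_of_neg (by norm_num)
      exact Real.tendsto_exp_atBot.comp this
    have hB : Tendsto (fun t : ℝ => Real.exp (-2 * t)) atTop (nhds 0) := by
      have : Tendsto (fun t : ℝ => -2 * t) atTop atBot :=
        tendsto_id.const_mul_atTop_of_neg (by norm_num)
      exact Real.tendsto_exp_atBot.comp this
    have h1 : Tendsto (fun t : ℝ => a * Real.exp (-3 * t)) atTop (nhds 0) := by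
      simpa using hA.const_mul a
    have h2 : Tendsto (fun t : ℝ => b * Real.exp (-2 * t)) atTop (nhds 0) := by
      simpa using hB.const_mul b
    exact h1.prodMk_nhds h2
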